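/- Assume β + λω_k ≠ 0 for all k = 0,…,N−1 (so that β·I_N + λA is invertible). Then: (i) for each k = 0,…,N−1 the vector (u_k, 0) ∈ ℂ^{2N} is an eigenvector of B for the eigenvalue λω_k; (ii) for each n = 1,…,N the vector (−(β·I_N + λA)^{−1} A e_n, e_n) ∈ ℂ^{2N}, where e_n is the n-th standard basis vector of ℂ^N, is an eigenvector of B for the eigenvalue −β; (iii) these 2N vectors form a basis of ℂ^{2N}, so B is diagonalizable over ℂ. -/

import Mathlib

open Matrix Complex Finset

noncomputable section

/-- The N×N matrix with -1 on the diagonal and 1 on the (cyclic) superdiagonal. -/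
def ringMat (N : ℕ) : Matrix (Fin N) (Fin N) ℝ :=
  fun n m => if (m : ℕ) = (n : ℕ) then -1 else if (m : ℕ) = ((n : ℕ) + 1) % N then 1 else 0

/-- Complexification of `ringMat`. -/
def Ac (N : ℕ) : Matrix (Fin N) (Fin N) ℂ := (ringMat N).map Complex.ofReal

/-- γ_k = e^{2πik/N} -/
def gam (N k : ℕ) : ℂ := Complex.exp (2 * Real.pi * Complex.I * k / N)

/-- u_k = (γ_k^0, γ_k^1, …, γ_k^{N-1}). -/
def uVec (N k : ℕ) : Fin N → ℂ := fun n => gam N k ^ (n : ℕ)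

/-- The 2N×2N block matrix B = [[λA, A], [0, −β I_N]] (complexified). -/
def blockB (N : ℕ) (lam beta : ℝ) : Matrix (Fin N ⊕ Fin N) (Fin N ⊕ Fin N) ℂ :=
  Matrix.fromBlocks ((lam : ℂ) • Ac N) (Ac N) 0 (-(beta : ℂ) • 1)

/-- The eigenvector (u_k, 0) of B for the eigenvalue λω_k. -/
def eigvecTop (N k : ℕ) : Fin N ⊕ Fin N → ℂ := Sum.elim (uVec N k) 0

/-- The eigenvector (−(βI_N + λA)⁻¹ A e_n, e_n) of B for the eigenvalue −β. -/
def eigvecBot (N : ℕ) (lam beta : ℝ) (n : Fin N) : Fin N ⊕ Fin N → ℂ :=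
  Sum.elim
    (-(((beta : ℂ) • (1 : Matrix (Fin N) (Fin N) ℂ) + (lam : ℂ) • Ac N)⁻¹.mulVec
        ((Ac N).mulVec (Pi.single n 1))))
    (Pi.single n 1)

/-! ### Auxiliary lemmas -/

lemma gam_pow_N' (N k : ℕ) (hN : N ≠ 0) : gam N k ^ N = 1 := by
  rw [gam, ← Complex.exp_nat_mul]
  have hNc : (N : ℂ) ≠ 0 := Nat.cast_ne_zero.mpr hN
  have : (N : ℂ) * (2 * Real.pi * Complex.I * k / N) = (k : ℤ) * (2 * Real.pi * Complex.I) := by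
    field_simp; norm_cast
  rw [this, Complex.exp_int_mul_two_pi_mul_I]

lemma gam_inj' (N : ℕ) (hN : N ≠ 0) {j k : ℕ} (hj : j < N) (hk : k < N)
    (h : gam N j = gam N k) : j = k := by
  rw [gam, gam, Complex.exp_eq_exp_iff_exists_int] at h
  obtain ⟨n, hn⟩ := h
  have hNc : (N : ℂ) ≠ 0 := Nat.cast_ne_zero.mpr hN
  have hI : (2 : ℂ) * Real.pi * Complex.I ≠ 0 := by
    simp [Real.pi_ne_zero, Complex.I_ne_zero]
  field_simp at hn
  have h3 : (j : ℂ) = (k : ℂ) + n * N :=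
    by linear_combination hn
  have h4 : (j : ℤ) = k + n * N := by exact_mod_cast h3
  have hn0 : n = 0 := by
    by_contra h0
    have h1 : 1 ≤ |n| := Int.one_le_abs (by omega)
    have hNpos : (0 : ℤ) < N := by exact_mod_cast Nat.pos_of_ne_zero hN
    have h5 : (N : ℤ) ≤ |n| * N := le_mul_of_one_le_left hNpos.le h1
    have habs : |(j : ℤ) - k| = |n| * N := by
      rw [show (j : ℤ) - k = n * N by omega, abs_mul, abs_of_nonneg hNpos.le]
    have : |(j : ℤ) - k| < N := by rw [abs_sub_lt_iff]; omega
    omega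
  rw [hn0, zero_mul, add_zero] at h4
  exact_mod_cast h4

def cyc {N : ℕ} (n : Fin N) : Fin N := ⟨((n : ℕ) + 1) % N, Nat.mod_lt _ n.pos⟩

lemma cyc_ne {N : ℕ} (hN : 2 ≤ N) (n : Fin N) : cyc n ≠ n := by
  intro h
  have h' : ((n : ℕ) + 1) % N = (n : ℕ) := congrArg Fin.val h
  have hn := n.isLt
  rcases Nat.lt_or_ge ((n : ℕ) + 1) N with hlt | hge
  · rw [Nat.mod_eq_of_lt hlt] at h'; omega
  · have hNe : (n : ℕ) + 1 = N := by omega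
    rw [hNe, Nat.mod_self] at h'
    omega

lemma Ac_mulVec' (N : ℕ) (hN : 2 ≤ N) (v : Fin N → ℂ) :
    (Ac N).mulVec v = fun n => -(v n) + v (cyc n) := by
  funext n
  have hne := cyc_ne hN n
  have key : ∀ m : Fin N, (Ac N) n m * v m =
      (if m = n then -(v m) else 0) + (if m = cyc n then v m else 0) := by
    intro m
    have hval : ((n : ℕ) + 1) % N = ((cyc n : Fin N) : ℕ) := rfl
    simp only [Ac, ringMat, Matrix.map_apply, hval, Fin.val_eq_val]
    rcases eq_or_ne m n with rfl | h1
    · simp [Ne.symm hne]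
    · rcases eq_or_ne m (cyc n) with rfl | h2
      · simp [h1]
      · simp [h1, h2]
  simp only [Matrix.mulVec, dotProduct]
  rw [Finset.sum_congr rfl fun m _ => key m, Finset.sum_add_distrib,
    Finset.sum_ite_eq' Finset.univ n (fun m => -(v m)),
    Finset.sum_ite_eq' Finset.univ (cyc n) v]
  simp

lemma Ac_mulVec_uVec' (N k : ℕ) (hN : 2 ≤ N) :
    (Ac N).mulVec (uVec N k) = (gam N k - 1) • uVec N k := by
  rw [Ac_mulVec' N hN]
  funext n
  have hpow : gam N k ^ (((n : ℕ) + 1) % N) = gam N k ^ ((n : ℕ) + 1) := by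
    conv_rhs => rw [← Nat.mod_add_div ((n : ℕ) + 1) N]
    rw [pow_add, pow_mul, gam_pow_N' N k (by omega), one_pow, mul_one]
  simp only [uVec, cyc, Pi.smul_apply, smul_eq_mul]
  rw [hpow]
  ring


/-- under β + λω_k ≠ 0 for all k, the vectors (u_k,0) are eigenvectors of B
for λω_k, the vectors (−(βI+λA)⁻¹Ae_n, e_n) are eigenvectors for −β, and together these
2N vectors form a basis of ℂ^{2N}, so B is diagonalizable. -/
theorem stmt6 (N : ℕ) (hN : 2 ≤ N) (lam beta : ℝ) (hlam : 0 < lam) (hbeta : 0 < beta)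
    (hinv : ∀ k < N, (beta : ℂ) + lam * (gam N k - 1) ≠ 0) :
    (∀ k < N, (blockB N lam beta).mulVec (eigvecTop N k) =
        ((lam : ℂ) * (gam N k - 1)) • eigvecTop N k) ∧
    (∀ n : Fin N, (blockB N lam beta).mulVec (eigvecBot N lam beta n) =
        (-(beta : ℂ)) • eigvecBot N lam beta n) ∧
    LinearIndependent ℂ
      (Sum.elim (fun k : Fin N => eigvecTop N (k : ℕ)) (eigvecBot N lam beta)) ∧
    Submodule.span ℂ
        (Set.range (Sum.elim (fun k : Fin N => eigvecTop N (k : ℕ)) (eigvecBot N lam beta)))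
      = ⊤ := by
  have hN0 : N ≠ 0 := by omega
  -- the Vandermonde matrix
  set V : Matrix (Fin N) (Fin N) ℂ :=
    (Matrix.vandermonde (fun k : Fin N => gam N (k : ℕ)))ᵀ with hV
  have hVapp : ∀ n k : Fin N, V n k = uVec N (k : ℕ) n := by
    intro n k; simp [hV, Matrix.vandermonde, uVec]
  have hVdet : V.det ≠ 0 := by
    rw [hV, Matrix.det_transpose]
    rw [Matrix.det_vandermonde_ne_zero_iff]
    intro a b hab
    exact Fin.ext (gam_inj' N hN0 a.isLt b.isLt hab)
  -- the matrix M = βI + λA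
  set M : Matrix (Fin N) (Fin N) ℂ :=
    (beta : ℂ) • (1 : Matrix (Fin N) (Fin N) ℂ) + (lam : ℂ) • Ac N with hM
  have hMu : ∀ k : ℕ, M.mulVec (uVec N k) =
      ((beta : ℂ) + lam * (gam N k - 1)) • uVec N k := by
    intro k
    rw [hM, Matrix.add_mulVec, Matrix.smul_mulVec, Matrix.smul_mulVec,
      Matrix.one_mulVec, Ac_mulVec_uVec' N k hN]
    funext n
    simp only [Pi.add_apply, Pi.smul_apply, smul_eq_mul]
    ring
  set d : Fin N → ℂ := fun k => (beta : ℂ) + lam * (gam N (k : ℕ) - 1) with hd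
  have hMV : M * V = V * Matrix.diagonal d := by
    ext n k
    have h := congrFun (hMu (k : ℕ)) n
    simp only [Matrix.mulVec, dotProduct, Pi.smul_apply, smul_eq_mul] at h
    rw [Matrix.mul_diagonal]
    simp only [Matrix.mul_apply]
    calc ∑ j, M n j * V j k = ∑ j, M n j * uVec N (k : ℕ) j := by
          refine Finset.sum_congr rfl fun j _ => by rw [hVapp]
      _ = ((beta : ℂ) + lam * (gam N (k : ℕ) - 1)) * uVec N (k : ℕ) n := h
      _ = V n k * d k := by rw [hVapp, hd]; ring
  have hMdet : IsUnit M.det := by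
    have h1 : M.det * V.det = V.det * ∏ k, d k := by
      rw [← Matrix.det_mul, hMV, Matrix.det_mul, Matrix.det_diagonal]
    have h2 : M.det = ∏ k, d k := by
      apply mul_right_cancel₀ hVdet
      rw [h1, mul_comm]
    rw [isUnit_iff_ne_zero, h2]
    exact Finset.prod_ne_zero_iff.mpr fun k _ => hinv (k : ℕ) k.isLt
  have hMM : M * M⁻¹ = 1 := Matrix.mul_nonsing_inv _ hMdet
  -- Part (i)
  have part1 : ∀ k < N, (blockB N lam beta).mulVec (eigvecTop N k) =
      ((lam : ℂ) * (gam N k - 1)) • eigvecTop N k := by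
    intro k _
    unfold blockB
    rw [Matrix.fromBlocks_mulVec]
    have hcl : eigvecTop N k ∘ Sum.inl = uVec N k := rfl
    have hcr : eigvecTop N k ∘ Sum.inr = 0 := rfl
    rw [hcl, hcr, Matrix.mulVec_zero, Matrix.mulVec_zero, add_zero, Matrix.zero_mulVec,
      zero_add, Matrix.smul_mulVec, Ac_mulVec_uVec' N k hN]
    funext j
    cases j with
    | inl m =>
      simp only [Sum.elim_inl, eigvecTop, Pi.smul_apply, Sum.elim_inl, smul_eq_mul]
      ring
    | inr m =>
      simp [eigvecTop]
  -- Part (ii)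
  have part2 : ∀ n : Fin N, (blockB N lam beta).mulVec (eigvecBot N lam beta n) =
      (-(beta : ℂ)) • eigvecBot N lam beta n := by
    intro n
    set e : Fin N → ℂ := Pi.single n 1 with he
    set w : Fin N → ℂ := (Ac N).mulVec e with hw
    set x : Fin N → ℂ := -(M⁻¹.mulVec w) with hx
    have hMx : M.mulVec x = -w := by
      rw [hx, Matrix.mulVec_neg, Matrix.mulVec_mulVec, hMM, Matrix.one_mulVec]
    rw [hM, Matrix.add_mulVec, Matrix.smul_mulVec, Matrix.smul_mulVec,
      Matrix.one_mulVec] at hMx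
    have h2 : (lam : ℂ) • (Ac N).mulVec x = -w - (beta : ℂ) • x :=
      eq_sub_of_add_eq' hMx
    have hbotv : eigvecBot N lam beta n = Sum.elim x e := rfl
    unfold blockB
    rw [Matrix.fromBlocks_mulVec]
    have hcl : eigvecBot N lam beta n ∘ Sum.inl = x := rfl
    have hcr : eigvecBot N lam beta n ∘ Sum.inr = e := rfl
    rw [hcl, hcr, Matrix.zero_mulVec, zero_add, Matrix.smul_mulVec, h2,
      Matrix.smul_mulVec, Matrix.one_mulVec]
    funext j
    cases j with
    | inl m =>
      simp only [Sum.elim_inl, hbotv, Pi.smul_apply, Pi.add_apply, Pi.sub_apply,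
        Pi.neg_apply, smul_eq_mul]
      ring
    | inr m =>
      simp only [Sum.elim_inr, hbotv, Pi.smul_apply, smul_eq_mul]
  -- Part (iii)
  set X : Matrix (Fin N) (Fin N) ℂ := -(M⁻¹ * Ac N) with hX
  set C : Matrix (Fin N ⊕ Fin N) (Fin N ⊕ Fin N) ℂ :=
    Matrix.fromBlocks V X 0 1 with hC
  have hCdet : IsUnit C.det := by
    rw [hC, Matrix.det_fromBlocks_zero₂₁, Matrix.det_one, mul_one, isUnit_iff_ne_zero]
    exact hVdet
  haveI : Invertible C := C.invertibleOfIsUnitDet hCdet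
  have hfeq : Sum.elim (fun k : Fin N => eigvecTop N (k : ℕ)) (eigvecBot N lam beta) =
      fun j => C.mulVec (Pi.single j 1) := by
    funext j
    cases j with
    | inl k =>
      have hsingle : (Pi.single (Sum.inl k) (1 : ℂ) : Fin N ⊕ Fin N → ℂ) =
          Sum.elim (Pi.single k 1) 0 := by
        funext y
        cases y with
        | inl m => simp [Pi.single_apply]
        | inr m => simp [Pi.single_apply]
      show eigvecTop N (k : ℕ) = C.mulVec (Pi.single (Sum.inl k) 1)
      rw [hsingle, hC, Matrix.fromBlocks_mulVec]
      have h1 : (Sum.elim (Pi.single k 1) 0 : Fin N ⊕ Fin N → ℂ) ∘ Sum.inl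
          = Pi.single k 1 := rfl
      have h2 : (Sum.elim (Pi.single k 1) 0 : Fin N ⊕ Fin N → ℂ) ∘ Sum.inr = 0 := rfl
      rw [h1, h2, Matrix.mulVec_zero, Matrix.mulVec_zero, add_zero, Matrix.zero_mulVec,
        zero_add, Matrix.mulVec_single]
      funext y
      cases y with
      | inl m => simp [eigvecTop, hVapp]
      | inr m => simp [eigvecTop]
    | inr n =>
      have hsingle : (Pi.single (Sum.inr n) (1 : ℂ) : Fin N ⊕ Fin N → ℂ) =
          Sum.elim (0 : Fin N → ℂ) (Pi.single n 1) := by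
        funext y
        cases y with
        | inl m => simp [Pi.single_apply]
        | inr m => simp [Pi.single_apply]
      show eigvecBot N lam beta n = C.mulVec (Pi.single (Sum.inr n) 1)
      rw [hsingle, hC, Matrix.fromBlocks_mulVec]
      have h1 : (Sum.elim (0 : Fin N → ℂ) (Pi.single n 1) : Fin N ⊕ Fin N → ℂ) ∘ Sum.inl = 0 := rfl
      have h2 : (Sum.elim (0 : Fin N → ℂ) (Pi.single n 1) : Fin N ⊕ Fin N → ℂ) ∘ Sum.inr
          = Pi.single n 1 := rfl
      rw [h1, h2]
      simp only [Matrix.mulVec_zero, Matrix.zero_mulVec, zero_add, Matrix.one_mulVec]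
      have hXv : X.mulVec (Pi.single n 1) =
          -(M⁻¹.mulVec ((Ac N).mulVec (Pi.single n 1))) := by
        rw [hX, Matrix.neg_mulVec, Matrix.mulVec_mulVec]
      rw [hXv]
      rfl
  have hinj : Function.Injective C.mulVecLin := by
    have h := Matrix.mulVec_injective_of_invertible C
    intro a b hab
    exact h (by simpa using hab)
  have hbasis : ∀ j : Fin N ⊕ Fin N,
      C.mulVecLin ((Pi.basisFun ℂ (Fin N ⊕ Fin N)) j) = C.mulVec (Pi.single j 1) := by
    intro j
    rw [Pi.basisFun_apply]
    rfl
  constructor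
  · exact part1
  constructor
  · exact part2
  constructor
  · rw [hfeq]
    have hli := ((Pi.basisFun ℂ (Fin N ⊕ Fin N)).linearIndependent).map'
      C.mulVecLin (LinearMap.ker_eq_bot.mpr hinj)
    have : (⇑C.mulVecLin ∘ ⇑(Pi.basisFun ℂ (Fin N ⊕ Fin N))) =
        fun j => C.mulVec (Pi.single j 1) := by
      funext j
      exact hbasis j
    rwa [this] at hli
  · rw [hfeq]
    have hsurj : Function.Surjective C.mulVecLin := by
      have h := Matrix.mulVec_surjective_of_invertible C
      intro y
      obtain ⟨v, hv⟩ := h y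
      exact ⟨v, by simpa using hv⟩
    have hcomp : (fun j => C.mulVec (Pi.single j 1)) =
        ⇑C.mulVecLin ∘ ⇑(Pi.basisFun ℂ (Fin N ⊕ Fin N)) := by
      funext j
      exact (hbasis j).symm
    rw [hcomp, Set.range_comp, ← Submodule.map_span, Module.Basis.span_eq, Submodule.map_top,
      LinearMap.range_eq_top]
    exact hsurj
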